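/- Let R ≤ M_n(ℂ) be a subspace with R† = R, and assume that n is odd. If dim(R) ≥ 2, then R has a Hermitian orthonormal basis such that at most one basis element is invertible. -/

import Mathlib

namespace QG

open Matrix

abbrev Mat (n : ℕ) := Matrix (Fin n) (Fin n) ℂ

/-- `a : Fin d → Mat n` is an orthonormal basis of `R` with respect to the normalized
trace inner product `⟨a, b⟩ = tr(aᴴ b) / n`. -/
def IsONBasis {n d : ℕ} (R : Submodule ℂ (Mat n)) (a : Fin d → Mat n) : Prop :=
  (∀ i, a i ∈ R) ∧ Submodule.span ℂ (Set.range a) = R ∧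
    ∀ i j, ((a i)ᴴ * a j).trace / (n : ℂ) = if i = j then 1 else 0

section Aux

variable {n : ℕ}

lemma trace_self_eq (x : Mat n) : ((xᴴ * x).trace) = ∑ i, ∑ j, (Complex.normSq (x j i) : ℂ) := by
  simp [Matrix.trace, Matrix.mul_apply, Matrix.diag, Matrix.conjTranspose_apply]
  congr 1; ext i; congr 1; ext j
  rw [mul_comm]; exact (Complex.mul_conj (x j i))

lemma trace_self_re (x : Mat n) : ((xᴴ * x).trace).re = ∑ i, ∑ j, Complex.normSq (x j i) := by
  rw [trace_self_eq]
  norm_cast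

lemma real_smul_eq (r : ℝ) (a : Mat n) : r • a = (r : ℂ) • a := by
  ext i j; simp [Matrix.smul_apply, Complex.real_smul]

lemma isHermitian_real_smul {r : ℝ} {a : Mat n} (h : a.IsHermitian) :
    ((r : ℂ) • a).IsHermitian := by
  unfold Matrix.IsHermitian at *
  rw [Matrix.conjTranspose_smul, h]
  simp

noncomputable def hermSub (R : Submodule ℂ (Mat n)) : Submodule ℝ (Mat n) where
  carrier := {a | a ∈ R ∧ a.IsHermitian}
  add_mem' := fun ha hb => ⟨R.add_mem ha.1 hb.1, ha.2.add hb.2⟩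
  zero_mem' := ⟨R.zero_mem, Matrix.isHermitian_zero⟩
  smul_mem' := by
    intro r a h
    obtain ⟨h1, h2⟩ := h
    rw [Set.mem_setOf_eq, real_smul_eq]
    exact ⟨R.smul_mem _ h1, isHermitian_real_smul h2⟩

lemma trace_herm_real {p q : Mat n} (hp : p.IsHermitian) (hq : q.IsHermitian) :
    ((pᴴ * q).trace) = (((pᴴ * q).trace).re : ℂ) := by
  refine (Complex.conj_eq_iff_re.mp ?_).symm
  calc (starRingEnd ℂ) (pᴴ * q).trace = ((pᴴ * q)ᴴ).trace := by
        rw [Matrix.trace_conjTranspose]; rfl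
    _ = (qᴴ * p).trace := by rw [Matrix.conjTranspose_mul, Matrix.conjTranspose_conjTranspose]
    _ = (q * p).trace := by rw [hq]
    _ = (p * q).trace := Matrix.trace_mul_comm q p
    _ = (pᴴ * q).trace := by rw [hp]

noncomputable def hermCore (R : Submodule ℂ (Mat n)) :
    InnerProductSpace.Core ℝ ↥(hermSub R) where
  inner x y := (((x : Mat n)ᴴ * (y : Mat n)).trace).re
  conj_inner_symm := by
    intro x y
    simp only [starRingEnd_apply, star_trivial]
    have : (((y:Mat n)ᴴ * x).trace) = star (((x:Mat n)ᴴ * y).trace) := by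
      rw [← Matrix.trace_conjTranspose, Matrix.conjTranspose_mul,
        Matrix.conjTranspose_conjTranspose]
    rw [this]
    simp
  re_inner_nonneg := by
    intro x
    simp only [RCLike.re_to_real]
    rw [trace_self_re]
    exact Finset.sum_nonneg fun i _ => Finset.sum_nonneg fun j _ => Complex.normSq_nonneg _
  add_left := by
    intro x y z
    push_cast [Matrix.conjTranspose_add, Matrix.add_mul, Matrix.trace_add]
    simp [Complex.add_re]
  smul_left := by
    intro x y r
    simp only [starRingEnd_apply, star_trivial]
    have : ((r • x : ↥(hermSub R)) : Mat n) = (r : ℂ) • (x : Mat n) := by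
      rw [Submodule.coe_smul, real_smul_eq]
    rw [this, Matrix.conjTranspose_smul, Matrix.smul_mul, Matrix.trace_smul]
    simp [Complex.real_smul]
  definite := by
    intro x hx
    have h0 : (((x : Mat n)ᴴ * x).trace).re = 0 := hx
    rw [trace_self_re] at h0
    have h1 : ∀ i ∈ (Finset.univ : Finset (Fin n)),
        (∑ j, Complex.normSq ((x : Mat n) j i)) = 0 :=
      (Finset.sum_eq_zero_iff_of_nonneg (fun i _ => Finset.sum_nonneg
        (fun j _ => Complex.normSq_nonneg _))).mp h0
    apply Subtype.ext
    ext i j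
    have h2 := (Finset.sum_eq_zero_iff_of_nonneg
      (fun k _ => Complex.normSq_nonneg ((x : Mat n) k j))).mp
      (h1 j (Finset.mem_univ j)) i (Finset.mem_univ i)
    simpa using Complex.normSq_eq_zero.mp h2

lemma exists_herm_onb (R : Submodule ℂ (Mat n)) (hstar : ∀ a ∈ R, aᴴ ∈ R) (hn : n ≠ 0) :
    ∃ (d : ℕ) (a : Fin d → Mat n), IsONBasis R a ∧ ∀ i, (a i).IsHermitian := by
  letI : NormedAddCommGroup ↥(hermSub R) := (hermCore R).toNormedAddCommGroup
  letI : InnerProductSpace ℝ ↥(hermSub R) := InnerProductSpace.ofCore (hermCore R).toCore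
  haveI : FiniteDimensional ℝ ↥(hermSub R) := by infer_instance
  set m := Module.finrank ℝ ↥(hermSub R) with hm
  let b := stdOrthonormalBasis ℝ ↥(hermSub R)
  set e : Fin m → Mat n := fun i => ((b i : ↥(hermSub R)) : Mat n) with he
  have hHe : ∀ i, (e i).IsHermitian := fun i => (b i).2.2
  have hmemE : ∀ i, e i ∈ R := fun i => (b i).2.1
  have hortho : ∀ i j, ((e i)ᴴ * e j).trace = if i = j then 1 else 0 := by
    intro i j
    have h1 := orthonormal_iff_ite.mp b.orthonormal i j
    have h2 : (((e i)ᴴ * e j).trace).re = if i = j then 1 else 0 := h1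
    rw [trace_herm_real (hHe i) (hHe j), h2]
    split <;> norm_num
  set c : ℂ := (Real.sqrt n : ℂ) with hc
  have hc2 : c * c = (n : ℂ) := by
    rw [hc]
    norm_cast
    rw [Real.mul_self_sqrt (Nat.cast_nonneg n)]
  have hcne : c ≠ 0 := by
    intro h
    rw [hc] at h
    norm_cast at h
    have := Real.sqrt_eq_zero (Nat.cast_nonneg n) |>.mp h
    exact hn (by exact_mod_cast this)
  set a : Fin m → Mat n := fun i => c • e i with ha
  have hHa : ∀ i, (a i).IsHermitian := fun i => isHermitian_real_smul (hHe i)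
  have hmemA : ∀ i, a i ∈ R := fun i => R.smul_mem _ (hmemE i)
  refine ⟨m, a, ⟨hmemA, ?_, ?_⟩, hHa⟩
  · -- span
    apply le_antisymm
    · rw [Submodule.span_le]
      rintro _ ⟨i, rfl⟩
      exact hmemA i
    · intro x hx
      -- span ℂ (range a) = span ℂ (range e)
      have hspan_ae : Submodule.span ℂ (Set.range e) ≤ Submodule.span ℂ (Set.range a) := by
        rw [Submodule.span_le]
        rintro _ ⟨i, rfl⟩
        have : e i = c⁻¹ • a i := by
          rw [ha, smul_smul, inv_mul_cancel₀ hcne, one_smul]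
        rw [this]
        exact Submodule.smul_mem _ _ (Submodule.subset_span ⟨i, rfl⟩)
      -- every element of hermSub R is in span ℂ (range e)
      have hherm : ∀ h ∈ hermSub R, h ∈ Submodule.span ℂ (Set.range e) := by
        intro h hh
        have h1 : (⟨h, hh⟩ : ↥(hermSub R)) ∈ Submodule.span ℝ (Set.range b) := by
          rw [← b.coe_toBasis, b.toBasis.span_eq]
          trivial
        have h2 : h ∈ Submodule.map (hermSub R).subtype (Submodule.span ℝ (Set.range b)) :=
          ⟨_, h1, rfl⟩
        rw [Submodule.map_span] at h2
        have h3 : (hermSub R).subtype '' Set.range b = Set.range e := by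
          rw [← Set.range_comp]
          rfl
        rw [h3] at h2
        exact Submodule.span_le_restrictScalars ℝ ℂ _ h2
      -- decompose x
      have hx1 : (1/2 : ℂ) • (x + xᴴ) ∈ hermSub R := by
        constructor
        · exact R.smul_mem _ (R.add_mem hx (hstar x hx))
        · unfold Matrix.IsHermitian
          rw [Matrix.conjTranspose_smul, Matrix.conjTranspose_add,
            Matrix.conjTranspose_conjTranspose]
          simp [add_comm]
      have hx2 : (-(Complex.I)/2 : ℂ) • (x - xᴴ) ∈ hermSub R := by
        constructor
        · exact R.smul_mem _ (R.sub_mem hx (hstar x hx))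
        · unfold Matrix.IsHermitian
          rw [Matrix.conjTranspose_smul, Matrix.conjTranspose_sub,
            Matrix.conjTranspose_conjTranspose]
          rw [smul_sub, smul_sub]
          have : star (-Complex.I / 2) = Complex.I / 2 := by
            rw [star_div₀, star_neg]
            norm_num
          rw [this]
          module
      have hdecomp : x = (1/2 : ℂ) • (x + xᴴ) + Complex.I • ((-(Complex.I)/2 : ℂ) • (x - xᴴ)) := by
        rw [smul_smul]
        have : Complex.I * (-(Complex.I)/2) = 1/2 := by
          field_simp
          simp [Complex.I_sq]
        rw [this]
        module
      rw [hdecomp]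
      exact hspan_ae (Submodule.add_mem _ (hherm _ hx1)
        (Submodule.smul_mem _ _ (hherm _ hx2)))
  · -- orthonormality
    intro i j
    have : ((a i)ᴴ * a j).trace = (n : ℂ) * (if i = j then 1 else 0) := by
      rw [ha]
      simp only [Matrix.conjTranspose_smul, Matrix.smul_mul, Matrix.mul_smul,
        Matrix.trace_smul, smul_smul, smul_eq_mul, hortho i j]
      have hsc : star c = c := by rw [hc]; exact Complex.conj_ofReal _
      rw [hsc, hc2]
    rw [this]
    have hn' : (n : ℂ) ≠ 0 := by exact_mod_cast hn
    field_simp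

lemma TL (r s : ℂ) (x y z : Mat n) :
    ((r • x + s • y)ᴴ * z).trace = star r * (xᴴ * z).trace + star s * (yᴴ * z).trace := by
  simp [Matrix.conjTranspose_add, Matrix.conjTranspose_smul, Matrix.add_mul,
    Matrix.smul_mul, Matrix.trace_add, Matrix.trace_smul, smul_eq_mul]

lemma TR (r s : ℂ) (x y z : Mat n) :
    (zᴴ * (r • x + s • y)).trace = r * (zᴴ * x).trace + s * (zᴴ * y).trace := by
  simp [Matrix.mul_add, Matrix.mul_smul, Matrix.trace_add, Matrix.trace_smul, smul_eq_mul]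

lemma det_herm_real {p : Mat n} (hp : p.IsHermitian) : (p.det : ℂ) = (p.det.re : ℂ) := by
  refine (Complex.conj_eq_iff_re.mp ?_).symm
  calc (starRingEnd ℂ) p.det = (pᴴ).det := (Matrix.det_conjTranspose p).symm
    _ = p.det := by rw [hp]

lemma rotate {d : ℕ} (hodd : Odd n) (R : Submodule ℂ (Mat n)) (a : Fin d → Mat n)
    (hON : IsONBasis R a) (hH : ∀ k, (a k).IsHermitian) {i j : Fin d} (hij : i ≠ j)
    (hui : IsUnit (a i)) (huj : IsUnit (a j)) :
    ∃ a' : Fin d → Mat n, IsONBasis R a' ∧ (∀ k, (a' k).IsHermitian) ∧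
      (∀ k, k ≠ i → k ≠ j → a' k = a k) ∧ ¬ IsUnit (a' i) := by
  obtain ⟨hmem, hspan, hT⟩ := hON
  have hn : n ≠ 0 := by rintro rfl; simpa using hodd
  have hn' : (n : ℂ) ≠ 0 := by exact_mod_cast hn
  have hu : ∀ p q, ((a p)ᴴ * a q).trace = if p = q then (n : ℂ) else 0 := by
    intro p q
    have := hT p q
    rw [div_eq_iff hn'] at this
    rw [this]
    split <;> simp
  -- the rotated matrix family
  set M : ℝ → Mat n := fun θ => (Real.cos θ : ℂ) • a i + (Real.sin θ : ℂ) • a j with hM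
  have hMH : ∀ θ, (M θ).IsHermitian :=
    fun θ => (isHermitian_real_smul (hH i)).add (isHermitian_real_smul (hH j))
  set f : ℝ → ℝ := fun θ => ((M θ).det).re with hf
  have hfc : Continuous f := by
    apply Complex.continuous_re.comp
    apply Continuous.matrix_det
    exact ((Complex.continuous_ofReal.comp Real.continuous_cos).smul
      continuous_const).add ((Complex.continuous_ofReal.comp Real.continuous_sin).smul
      continuous_const)
  have hM0 : M 0 = a i := by simp [hM]
  have hMpi : M Real.pi = -(a i) := by
    simp [hM]
  have hdet_i : (a i).det ≠ 0 := by
    intro h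
    exact (Matrix.isUnit_iff_isUnit_det _ |>.mp hui).ne_zero (by rw [h])
  have hf0 : f 0 ≠ 0 := by
    intro h
    apply hdet_i
    rw [det_herm_real (hH i)]
    rw [hf] at h
    simp only [hM0] at h
    rw [h]
    norm_num
  have hfpi : f Real.pi = -(f 0) := by
    rw [hf]
    simp only [hM0, hMpi]
    rw [Matrix.det_neg]
    simp [Odd.neg_one_pow (by simpa using hodd)]
  -- IVT
  have hex : ∃ θ, f θ = 0 := by
    rcases lt_or_gt_of_ne hf0 with hlt | hgt
    · have h0 : (0 : ℝ) ∈ Set.Icc (f 0) (f Real.pi) := by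
        rw [hfpi]; constructor <;> linarith
      obtain ⟨θ, _, hθ⟩ := intermediate_value_Icc Real.pi_nonneg hfc.continuousOn h0
      exact ⟨θ, hθ⟩
    · have h0 : (0 : ℝ) ∈ Set.Icc (f Real.pi) (f 0) := by
        rw [hfpi]; constructor <;> linarith
      obtain ⟨θ, _, hθ⟩ := intermediate_value_Icc' Real.pi_nonneg hfc.continuousOn h0
      exact ⟨θ, hθ⟩
  obtain ⟨θ, hθ⟩ := hex
  set c : ℂ := (Real.cos θ : ℂ) with hcdef
  set s : ℂ := (Real.sin θ : ℂ) with hsdef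
  have hstc : star c = c := Complex.conj_ofReal _
  have hsts : star s = s := Complex.conj_ofReal _
  have hcs : c * c + s * s = 1 := by
    rw [hcdef, hsdef]
    norm_cast
    rw [← Real.sin_sq_add_cos_sq θ]
    ring
  set x : Mat n := c • a i + s • a j with hx
  set y : Mat n := (-s) • a i + c • a j with hy
  have hxH : x.IsHermitian := hMH θ
  have hyH : y.IsHermitian := by
    rw [hy]
    unfold Matrix.IsHermitian
    rw [Matrix.conjTranspose_add, Matrix.conjTranspose_smul, Matrix.conjTranspose_smul,
      hH i, hH j, star_neg, hsts, hstc]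
  have hxdet : ¬ IsUnit x := by
    rw [Matrix.isUnit_iff_isUnit_det, isUnit_iff_ne_zero, not_not]
    rw [det_herm_real hxH]
    have : x.det.re = 0 := hθ
    rw [this]
    norm_num
  -- trace computations
  have hxx : (xᴴ * x).trace = (n : ℂ) := by
    rw [hx, TL, TR, TR, hu, hu, hu, hu, hstc, hsts]
    simp only [eq_self_iff_true, if_true, if_neg hij, if_neg hij.symm]
    linear_combination (n : ℂ) * hcs
  have hyy : (yᴴ * y).trace = (n : ℂ) := by
    rw [hy, TL, TR, TR, hu, hu, hu, hu]
    rw [star_neg, hstc, hsts]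
    simp only [eq_self_iff_true, if_true, if_neg hij, if_neg hij.symm]
    linear_combination (n : ℂ) * hcs
  have hxy : (xᴴ * y).trace = 0 := by
    rw [hx, hy, TL, TR, TR, hu, hu, hu, hu, hstc, hsts]
    simp only [eq_self_iff_true, if_true, if_neg hij, if_neg hij.symm]
    ring
  have hyx : (yᴴ * x).trace = 0 := by
    rw [hy, hx, TL, TR, TR, hu, hu, hu, hu]
    rw [star_neg, hstc, hsts]
    simp only [eq_self_iff_true, if_true, if_neg hij, if_neg hij.symm]
    ring
  have hxk : ∀ k, k ≠ i → k ≠ j → (xᴴ * a k).trace = 0 := by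
    intro k hki hkj
    rw [hx, TL, hu, hu, if_neg (Ne.symm hki), if_neg (Ne.symm hkj)]
    ring
  have hkx : ∀ k, k ≠ i → k ≠ j → ((a k)ᴴ * x).trace = 0 := by
    intro k hki hkj
    rw [hx, TR, hu, hu, if_neg hki, if_neg hkj]
    ring
  have hyk : ∀ k, k ≠ i → k ≠ j → (yᴴ * a k).trace = 0 := by
    intro k hki hkj
    rw [hy, TL, hu, hu, if_neg (Ne.symm hki), if_neg (Ne.symm hkj)]
    ring
  have hky : ∀ k, k ≠ i → k ≠ j → ((a k)ᴴ * y).trace = 0 := by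
    intro k hki hkj
    rw [hy, TR, hu, hu, if_neg hki, if_neg hkj]
    ring
  set a' : Fin d → Mat n := fun k => if k = i then x else if k = j then y else a k with ha'
  have ha'i : a' i = x := by simp [ha']
  have ha'j : a' j = y := by simp [ha', hij.symm]
  have ha'k : ∀ k, k ≠ i → k ≠ j → a' k = a k := by
    intro k h1 h2; simp [ha', h1, h2]
  have hxR : x ∈ R := by
    rw [hx]; exact R.add_mem (R.smul_mem _ (hmem i)) (R.smul_mem _ (hmem j))
  have hyR : y ∈ R := by
    rw [hy]; exact R.add_mem (R.smul_mem _ (hmem i)) (R.smul_mem _ (hmem j))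
  have hmem' : ∀ k, a' k ∈ R := by
    intro k
    rcases eq_or_ne k i with rfl | h1
    · rw [ha'i]; exact hxR
    rcases eq_or_ne k j with rfl | h2
    · rw [ha'j]; exact hyR
    rw [ha'k k h1 h2]; exact hmem k
  have hherm' : ∀ k, (a' k).IsHermitian := by
    intro k
    rcases eq_or_ne k i with rfl | h1
    · rw [ha'i]; exact hxH
    rcases eq_or_ne k j with rfl | h2
    · rw [ha'j]; exact hyH
    rw [ha'k k h1 h2]; exact hH k
  refine ⟨a', ⟨hmem', ?_, ?_⟩, hherm', ha'k, ?_⟩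
  · -- span
    apply le_antisymm
    · rw [Submodule.span_le]
      rintro _ ⟨k, rfl⟩
      exact hmem' k
    · rw [← hspan, Submodule.span_le]
      rintro _ ⟨k, rfl⟩
      rcases eq_or_ne k i with rfl | h1
      · have h1 : c • x + (-s) • y = (c * c + s * s) • a k := by
          rw [hx, hy]; module
        rw [hcs, one_smul] at h1
        rw [← h1, ← ha'i, ← ha'j]
        exact Submodule.add_mem _
          (Submodule.smul_mem _ _ (Submodule.subset_span ⟨k, rfl⟩))
          (Submodule.smul_mem _ _ (Submodule.subset_span ⟨j, rfl⟩))
      rcases eq_or_ne k j with rfl | h2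
      · have h2 : s • x + c • y = (c * c + s * s) • a k := by
          rw [hx, hy]; module
        rw [hcs, one_smul] at h2
        rw [← h2, ← ha'i, ← ha'j]
        exact Submodule.add_mem _
          (Submodule.smul_mem _ _ (Submodule.subset_span ⟨i, rfl⟩))
          (Submodule.smul_mem _ _ (Submodule.subset_span ⟨k, rfl⟩))
      · rw [← ha'k k h1 h2]
        exact Submodule.subset_span ⟨k, rfl⟩
  · -- orthonormality
    intro p q
    rw [div_eq_iff hn']
    rcases eq_or_ne p i with hpi | hpi
    · rcases eq_or_ne q i with hqi | hqi
      · rw [hpi, hqi, ha'i, hxx, if_pos rfl]; ring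
      rcases eq_or_ne q j with hqj | hqj
      · rw [hpi, hqj, ha'i, ha'j, hxy, if_neg hij]; ring
      · rw [hpi, ha'i, ha'k q hqi hqj, hxk q hqi hqj, if_neg (Ne.symm hqi)]; ring
    rcases eq_or_ne p j with hpj | hpj
    · rcases eq_or_ne q i with hqi | hqi
      · rw [hpj, hqi, ha'j, ha'i, hyx, if_neg hij.symm]; ring
      rcases eq_or_ne q j with hqj | hqj
      · rw [hpj, hqj, ha'j, hyy, if_pos rfl]; ring
      · rw [hpj, ha'j, ha'k q hqi hqj, hyk q hqi hqj, if_neg (Ne.symm hqj)]; ring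
    rcases eq_or_ne q i with hqi | hqi
    · rw [hqi, ha'k p hpi hpj, ha'i, hkx p hpi hpj, if_neg hpi]; ring
    rcases eq_or_ne q j with hqj | hqj
    · rw [hqj, ha'k p hpi hpj, ha'j, hky p hpi hpj, if_neg hpj]; ring
    · rw [ha'k p hpi hpj, ha'k q hqi hqj, hu p q]
      split <;> ring
  · rw [ha'i]; exact hxdet

open scoped Classical in
lemma main_ind (hodd : Odd n) (R : Submodule ℂ (Mat n)) :
    ∀ (N d : ℕ) (a : Fin d → Mat n),
      (Finset.univ.filter fun k => IsUnit (a k)).card ≤ N →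
      IsONBasis R a → (∀ k, (a k).IsHermitian) →
      ∃ a' : Fin d → Mat n, IsONBasis R a' ∧ (∀ k, (a' k).IsHermitian) ∧
        ∀ p q, IsUnit (a' p) → IsUnit (a' q) → p = q := by
  intro N
  induction N with
  | zero =>
    intro d a hcard hON hH
    refine ⟨a, hON, hH, ?_⟩
    intro p q hp hq
    exfalso
    have hmem : p ∈ Finset.univ.filter fun k => IsUnit (a k) := by simp [hp]
    rw [Finset.card_eq_zero.mp (Nat.le_zero.mp hcard)] at hmem
    simp at hmem
  | succ N ih =>
    intro d a hcard hON hH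
    by_cases hex : ∃ p q, p ≠ q ∧ IsUnit (a p) ∧ IsUnit (a q)
    · obtain ⟨p, q, hpq, hp, hq⟩ := hex
      obtain ⟨a', hON', hH', hsame, hnu⟩ := rotate hodd R a hON hH hpq hp hq
      apply ih d a' ?_ hON' hH'
      have hsub : (Finset.univ.filter fun k => IsUnit (a' k)) ⊆
          (Finset.univ.filter fun k => IsUnit (a k)).erase p := by
        intro k hk
        simp only [Finset.mem_filter, Finset.mem_univ, true_and] at hk
        have hkp : k ≠ p := by rintro rfl; exact hnu hk
        rw [Finset.mem_erase]
        refine ⟨hkp, ?_⟩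
        simp only [Finset.mem_filter, Finset.mem_univ, true_and]
        rcases eq_or_ne k q with hkq | hkq
        · rw [hkq]; exact hq
        · rw [← hsame k hkp hkq]; exact hk
      calc (Finset.univ.filter fun k => IsUnit (a' k)).card
          ≤ ((Finset.univ.filter fun k => IsUnit (a k)).erase p).card :=
            Finset.card_le_card hsub
        _ = (Finset.univ.filter fun k => IsUnit (a k)).card - 1 :=
            Finset.card_erase_of_mem (by simp [hp])
        _ ≤ N := by omega
    · refine ⟨a, hON, hH, ?_⟩
      intro p q hp hq
      by_contra hne
      exact hex ⟨p, q, hne, hp, hq⟩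


end Aux

/-- a †-closed subspace of `M_n(ℂ)` with `n` odd and dimension at least `2`
has a Hermitian orthonormal basis with at most one invertible basis element. -/
theorem stmt9 {n : ℕ} (R : Submodule ℂ (Mat n)) (hstar : ∀ a ∈ R, aᴴ ∈ R)
    (hodd : Odd n) (hdim : 2 ≤ Module.finrank ℂ ↥R) :
    ∃ (d : ℕ) (a : Fin d → Mat n), IsONBasis R a ∧ (∀ i, (a i).IsHermitian) ∧
      ∀ i j, IsUnit (a i) → IsUnit (a j) → i = j := by
  classical
  have hn : n ≠ 0 := by rintro rfl; simp at hodd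
  obtain ⟨d, a, hON, hH⟩ := exists_herm_onb R hstar hn
  obtain ⟨a', h1, h2, h3⟩ := main_ind hodd R
    (Finset.univ.filter fun k => IsUnit (a k)).card d a le_rfl hON hH
  exact ⟨d, a', h1, h2, h3⟩

end QG
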